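/- Let A, B, C be complex matrices with A and C square. The block matrix M = [[A, B],[B*, C]] is positive semidefinite if and only if A is positive semidefinite, B = AW for some matrix W, and C ⪰ W*AW. -/

import Mathlib

open Matrix ComplexOrder

lemma range_conjTranspose_mul_self' {k n : Type*} [Fintype k] [Fintype n] [DecidableEq n]
    (A : Matrix k n ℂ) :
    LinearMap.range (Aᴴ * A).mulVecLin = LinearMap.range Aᴴ.mulVecLin := by
  apply Submodule.eq_of_le_of_finrank_le
  · rintro _ ⟨x, rfl⟩
    exact ⟨A.mulVec x, by simp [Matrix.mulVecLin_apply, Matrix.mulVec_mulVec]⟩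
  · show Aᴴ.rank ≤ (Aᴴ * A).rank
    rw [Matrix.rank_conjTranspose_mul_self, Matrix.rank_conjTranspose]

/-- Block matrix PSD characterization (Albert/Shmul'yan):
`[[A, B], [Bᴴ, C]]` is PSD iff `A` is PSD, `B = A * W` for some `W`, and `C ⪰ Wᴴ * A * W`. -/
theorem stmt_0 {m r : ℕ} (A : Matrix (Fin m) (Fin m) ℂ)
    (B : Matrix (Fin m) (Fin r) ℂ) (C : Matrix (Fin r) (Fin r) ℂ) :
    (Matrix.fromBlocks A B Bᴴ C).PosSemidef ↔
      A.PosSemidef ∧ ∃ W : Matrix (Fin m) (Fin r) ℂ,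
        B = A * W ∧ (C - Wᴴ * A * W).PosSemidef := by
  constructor
  · intro hM
    obtain ⟨N, hN⟩ : ∃ N : Matrix (Fin m ⊕ Fin r) (Fin m ⊕ Fin r) ℂ, Matrix.fromBlocks A B Bᴴ C = Nᴴ * N := by
      open scoped MatrixOrder in exact CStarAlgebra.nonneg_iff_eq_star_mul_self.mp hM.nonneg
    set P : Matrix (Fin m ⊕ Fin r) (Fin m) ℂ := N.submatrix id Sum.inl with hP
    set Q : Matrix (Fin m ⊕ Fin r) (Fin r) ℂ := N.submatrix id Sum.inr with hQ
    have hA : A = Pᴴ * P := by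
      ext i j
      have := congrFun (congrFun hN (Sum.inl i)) (Sum.inl j)
      simpa [Matrix.mul_apply, Matrix.conjTranspose_apply, hP] using this
    have hB : B = Pᴴ * Q := by
      ext i j
      have := congrFun (congrFun hN (Sum.inl i)) (Sum.inr j)
      simpa [Matrix.mul_apply, Matrix.conjTranspose_apply, hP, hQ] using this
    have hC : C = Qᴴ * Q := by
      ext i j
      have := congrFun (congrFun hN (Sum.inr i)) (Sum.inr j)
      simpa [Matrix.mul_apply, Matrix.conjTranspose_apply, hQ] using this
    have key : ∀ j, ∃ w : Fin m → ℂ,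
        (Pᴴ * P).mulVec w = Pᴴ.mulVec (fun k => Q k j) := by
      intro j
      have : Pᴴ.mulVec (fun k => Q k j) ∈ LinearMap.range (Pᴴ * P).mulVecLin := by
        rw [range_conjTranspose_mul_self']
        exact ⟨_, rfl⟩
      obtain ⟨w, hw⟩ := this
      exact ⟨w, hw⟩
    choose w hw using key
    set W : Matrix (Fin m) (Fin r) ℂ := Matrix.of (fun i j => w j i) with hWdef
    have hBW : B = A * W := by
      rw [hA, hB]
      ext i j
      have := congrFun (hw j) i
      simp only [Matrix.mulVec, Matrix.mul_apply, dotProduct, Matrix.conjTranspose_apply] at this ⊢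
      simpa [hWdef] using this.symm
    have h1 : Pᴴ * Q = Pᴴ * P * W := by rw [← hB, hBW, hA]
    have e2 : Wᴴ * Pᴴ * Q = Wᴴ * (Pᴴ * P) * W := by
      rw [Matrix.mul_assoc, h1]
      simp [Matrix.mul_assoc]
    have e1 : Qᴴ * (P * W) = Wᴴ * (Pᴴ * P) * W := by
      have h4 : (Wᴴ * (Pᴴ * P) * W)ᴴ = Wᴴ * (Pᴴ * P) * W := by
        simp [Matrix.conjTranspose_mul, Matrix.mul_assoc]
      have h3 : Qᴴ * (P * W) = (Wᴴ * Pᴴ * Q)ᴴ := by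
        simp [Matrix.conjTranspose_mul, Matrix.mul_assoc]
      rw [h3, e2, h4]
    have e3 : Wᴴ * Pᴴ * (P * W) = Wᴴ * (Pᴴ * P) * W := by
      simp [Matrix.mul_assoc]
    have hSchur : C - Wᴴ * A * W = (Q - P * W)ᴴ * (Q - P * W) := by
      rw [Matrix.conjTranspose_sub, Matrix.conjTranspose_mul, Matrix.sub_mul,
        Matrix.mul_sub, Matrix.mul_sub, e1, e2, e3, hC, hA]
      abel
    refine ⟨by rw [hA]; exact Matrix.posSemidef_conjTranspose_mul_self P, W, hBW, ?_⟩
    rw [hSchur]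
    exact Matrix.posSemidef_conjTranspose_mul_self _
  · rintro ⟨hA, W, rfl, hS⟩
    obtain ⟨S, hS1⟩ : ∃ S : Matrix (Fin m) (Fin m) ℂ, A = Sᴴ * S := by
      open scoped MatrixOrder in exact CStarAlgebra.nonneg_iff_eq_star_mul_self.mp hA.nonneg
    obtain ⟨T, hT⟩ : ∃ T : Matrix (Fin r) (Fin r) ℂ, C - Wᴴ * A * W = Tᴴ * T := by
      open scoped MatrixOrder in exact CStarAlgebra.nonneg_iff_eq_star_mul_self.mp hS.nonneg
    have hAH : Aᴴ = A := hA.1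
    have key : Matrix.fromBlocks A (A * W) (A * W)ᴴ C
        = (Matrix.fromBlocks S (S * W) 0 T)ᴴ * (Matrix.fromBlocks S (S * W) 0 T) := by
      rw [Matrix.fromBlocks_conjTranspose, Matrix.fromBlocks_multiply]
      simp only [Matrix.conjTranspose_zero, Matrix.zero_mul, Matrix.mul_zero, add_zero, zero_add]
      have c12 : Sᴴ * (S * W) = A * W := by rw [hS1, Matrix.mul_assoc]
      have c21 : (S * W)ᴴ * S = (A * W)ᴴ := by
        simp [hS1, Matrix.conjTranspose_mul, Matrix.mul_assoc]
      have c22 : (S * W)ᴴ * (S * W) + Tᴴ * T = C := by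
        rw [Matrix.conjTranspose_mul, Matrix.mul_assoc, ← Matrix.mul_assoc Sᴴ S W,
          ← hS1, ← Matrix.mul_assoc, ← hT]
        abel
      rw [c12, c21, c22, ← hS1]
    rw [key]
    exact Matrix.posSemidef_conjTranspose_mul_self _
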